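/- The Adler–Yamilov map Y_{a,b}(x₁,x₂,y₁,y₂) = (y₁ + (b−a)x₁/(1 + x₁y₂), y₂, x₁, x₂ + (a−b)y₂/(1 + x₁y₂)) satisfies the parametric Yang–Baxter equation Y¹²_{a,b} ∘ Y¹³_{a,c} ∘ Y²³_{b,c} = Y²³_{b,c} ∘ Y¹³_{a,c} ∘ Y¹²_{a,b}, on the domain where all occurring denominators 1 + x₁y₂ are nonzero. -/

import Mathlib

/-- The Adler–Yamilov map. -/
noncomputable def AY {K : Type*} [Field K] (a b : K) :
    (K × K) × (K × K) → (K × K) × (K × K) := fun p =>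
  ((p.2.1 + (b - a) * p.1.1 / (1 + p.1.1 * p.2.2), p.2.2),
   (p.1.1, p.1.2 + (a - b) * p.2.2 / (1 + p.1.1 * p.2.2)))

/-- The denominator occurring in the Adler–Yamilov map applied to (x, y). -/
def AYden {K : Type*} [Field K] (x y : K × K) : K := 1 + x.1 * y.2

def lift12 {A : Type*} (f : A × A → A × A) : A × A × A → A × A × A :=
  fun p => ((f (p.1, p.2.1)).1, (f (p.1, p.2.1)).2, p.2.2)

def lift13 {A : Type*} (f : A × A → A × A) : A × A × A → A × A × A :=
  fun p => ((f (p.1, p.2.2)).1, p.2.1, (f (p.1, p.2.2)).2)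

def lift23 {A : Type*} (f : A × A → A × A) : A × A × A → A × A × A :=
  fun p => (p.1, (f (p.2.1, p.2.2)).1, (f (p.2.1, p.2.2)).2)

set_option maxHeartbeats 4000000 in
/-- The Adler–Yamilov map satisfies the parametric Yang–Baxter equation on the
domain where all occurring denominators `1 + x₁y₂` are nonzero. -/
theorem AY_yang_baxter {K : Type*} [Field K] [CharZero K] (a b c : K)
    (x y z : K × K)
    -- denominators on the left-hand side composition
    (h1 : AYden y z ≠ 0)
    (h2 : AYden x ((lift23 (AY b c)) (x, y, z)).2.2 ≠ 0)
    (h3 : AYden ((lift13 (AY a c)) ((lift23 (AY b c)) (x, y, z))).1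
            ((lift13 (AY a c)) ((lift23 (AY b c)) (x, y, z))).2.1 ≠ 0)
    -- denominators on the right-hand side composition
    (h4 : AYden x y ≠ 0)
    (h5 : AYden ((lift12 (AY a b)) (x, y, z)).1
            ((lift12 (AY a b)) (x, y, z)).2.2 ≠ 0)
    (h6 : AYden ((lift13 (AY a c)) ((lift12 (AY a b)) (x, y, z))).2.1
            ((lift13 (AY a c)) ((lift12 (AY a b)) (x, y, z))).2.2 ≠ 0) :
    (lift12 (AY a b) ∘ lift13 (AY a c) ∘ lift23 (AY b c)) (x, y, z) =
      (lift23 (AY b c) ∘ lift13 (AY a c) ∘ lift12 (AY a b)) (x, y, z) := by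
  obtain ⟨x1,x2⟩ := x; obtain ⟨y1,y2⟩ := y; obtain ⟨z1,z2⟩ := z
  simp only [AYden, AY, lift12, lift13, lift23, Function.comp] at *
  field_simp at h2 h5
  field_simp at h3 h6
  simp only [Prod.mk.injEq]
  have e1 : 1 + z2 * y1 ≠ 0 := by rw [mul_comm]; exact h1
  have e2 : 1 + y1 * z2 + x1 * (y2 * (1 + y1 * z2) + (b - c) * z2) ≠ 0 := by
    intro h; apply h2; field_simp; linear_combination h
  have e5 : 1 + x1 * y2 + z2 * (y1 * (1 + x1 * y2) + x1 * (b - a)) ≠ 0 := by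
    intro h; apply h5; rw [h, zero_div]
  have e3 : (1 + y1 * z2 + x1 * (y2 * (1 + y1 * z2) + (b - c) * z2)) + z2 * (y1 * (1 + y1 * z2 + x1 * (y2 * (1 + y1 * z2) + (b - c) * z2)) + (c - a) * x1 * (1 + y1 * z2)) ≠ 0 := by
    intro h; apply h3; generalize hP : (1 + y1 * z2 + x1 * (y2 * (1 + y1 * z2) + (b - c) * z2)) = P at e2 h ⊢; field_simp; linear_combination h
  have e6 : (1 + x1 * y2 + z2 * (y1 * (1 + x1 * y2) + x1 * (b - a))) + x1 * (y2 * (1 + x1 * y2 + z2 * (y1 * (1 + x1 * y2) + x1 * (b - a))) + z2 * (a - c) * (1 + x1 * y2)) ≠ 0 := by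
    intro h; apply h6; generalize hP : (1 + x1 * y2 + z2 * (y1 * (1 + x1 * y2) + x1 * (b - a))) = P at e5 h ⊢; field_simp; linear_combination h
  have r1 : y2 + (b - c) * z2 / (1 + y1 * z2) = (y2 * (1 + y1 * z2) + (b - c) * z2) / (1 + y1 * z2) := by rw [add_div' _ _ _ h1]
  have r4 : y1 + (b - a) * x1 / (1 + x1 * y2) = (y1 * (1 + x1 * y2) + (b - a) * x1) / (1 + x1 * y2) := by rw [add_div' _ _ _ h4]
  have r2 : 1 + x1 * ((y2 * (1 + y1 * z2) + (b - c) * z2) / (1 + y1 * z2)) = (1 + y1 * z2 + x1 * (y2 * (1 + y1 * z2) + (b - c) * z2)) / (1 + y1 * z2) := by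
    rw [mul_div_assoc', add_div' _ _ _ h1]; ring
  have r5 : 1 + (y1 * (1 + x1 * y2) + (b - a) * x1) / (1 + x1 * y2) * z2 = (1 + x1 * y2 + z2 * (y1 * (1 + x1 * y2) + x1 * (b - a))) / (1 + x1 * y2) := by
    rw [div_mul_eq_mul_div, add_div' _ _ _ h4]; ring
  have r3 : 1 + (y1 + (c - a) * x1 / ((1 + y1 * z2 + x1 * (y2 * (1 + y1 * z2) + (b - c) * z2)) / (1 + y1 * z2))) * z2 = ((1 + y1 * z2 + x1 * (y2 * (1 + y1 * z2) + (b - c) * z2)) + z2 * (y1 * (1 + y1 * z2 + x1 * (y2 * (1 + y1 * z2) + (b - c) * z2)) + (c - a) * x1 * (1 + y1 * z2))) / (1 + y1 * z2 + x1 * (y2 * (1 + y1 * z2) + (b - c) * z2)) := by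
    rw [div_div_eq_mul_div, add_div' _ _ _ e2, div_mul_eq_mul_div, add_div' _ _ _ e2]; ring
  have r6 : 1 + x1 * (y2 + (a - c) * z2 / ((1 + x1 * y2 + z2 * (y1 * (1 + x1 * y2) + x1 * (b - a))) / (1 + x1 * y2))) = ((1 + x1 * y2 + z2 * (y1 * (1 + x1 * y2) + x1 * (b - a))) + x1 * (y2 * (1 + x1 * y2 + z2 * (y1 * (1 + x1 * y2) + x1 * (b - a))) + z2 * (a - c) * (1 + x1 * y2))) / (1 + x1 * y2 + z2 * (y1 * (1 + x1 * y2) + x1 * (b - a))) := by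
    rw [div_div_eq_mul_div, add_div' _ _ _ e5, mul_div_assoc', add_div' _ _ _ e5]; ring
  refine ⟨⟨?_, trivial⟩, ⟨?_, ?_⟩, trivial, ?_⟩ <;> simp only [r1, r4, r2, r5, r3, r6] <;>
    generalize hq3 : ((1 + y1 * z2 + x1 * (y2 * (1 + y1 * z2) + (b - c) * z2)) + z2 * (y1 * (1 + y1 * z2 + x1 * (y2 * (1 + y1 * z2) + (b - c) * z2)) + (c - a) * x1 * (1 + y1 * z2))) = q3 at e3 ⊢ <;> generalize hq6 : ((1 + x1 * y2 + z2 * (y1 * (1 + x1 * y2) + x1 * (b - a))) + x1 * (y2 * (1 + x1 * y2 + z2 * (y1 * (1 + x1 * y2) + x1 * (b - a))) + z2 * (a - c) * (1 + x1 * y2))) = q6 at e6 ⊢ <;>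
    generalize hq2 : (1 + y1 * z2 + x1 * (y2 * (1 + y1 * z2) + (b - c) * z2)) = q2 at e2 hq3 ⊢ <;> generalize hq5 : (1 + x1 * y2 + z2 * (y1 * (1 + x1 * y2) + x1 * (b - a))) = q5 at e5 hq6 ⊢ <;>
    generalize hd1 : (1 + y1 * z2) = d1 at h1 hq2 hq3 ⊢ <;> generalize hd4 : (1 + x1 * y2) = d4 at h4 hq5 hq6 ⊢ <;>
    field_simp <;> subst hq3 hq6 hq2 hq5 hd1 hd4 <;> ring
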